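/- ε-best reply of player x by overtaking (case b of Theorem 2, first branch of B_x): assume the utilities are normalized by pλ = 1 and c = 0, and that 0 < d0 := d_x(x0, y0) < d < d_y(x0, y0), where d = T·(v_max − v_min) and v_min < v_max. Let ε > 0 and let v ∈ Γ be such that v + d0/T + ε/T ≤ v_max, and set v* := v + d0/T + ε/T. Then u_x(x0, v*, y0, v) = D − ε, and for every w ∈ Γ, u_x(x0, w, y0, v) ≤ u_x(x0, v*, y0, v) + ε; i.e., v* is an ε-best reply of player x to player y driving at speed v. -/

import Mathlib

/-- The reduction of a real number `r` modulo the circuit length `D`: the relative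
position on the torus, `(r) mod D = r − D·⌊r/D⌋ ∈ [0, D)`. -/
noncomputable def modD (D r : ℝ) : ℝ := r - D * (⌊r / D⌋ : ℝ)

/-- The directed (clockwise) distance from `x` to `y` on the circuit of length `D`. -/
noncomputable def dirX (D x y : ℝ) : ℝ := if x ≤ y then y - x else D + y - x

/-- The directed (clockwise) distance from `y` to `x` on the circuit of length `D`. -/
noncomputable def dirY (D x y : ℝ) : ℝ := dirX D y x

/-- Normalized utility (pλ = 1, c = 0) of player x: starting from `x0`, `y0` and
driving at speeds `vx`, `vy` for time `T`. -/
noncomputable def uXn (D T x0 y0 vx vy : ℝ) : ℝ :=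
  if modD D (x0 + T * vx) ≠ modD D (y0 + T * vy) then
    dirX D (modD D (x0 + T * vx)) (modD D (y0 + T * vy))
  else D / 2

/-- Normalized utility (pλ = 1, c = 0) of player y. -/
noncomputable def uYn (D T x0 y0 vx vy : ℝ) : ℝ :=
  if modD D (x0 + T * vx) ≠ modD D (y0 + T * vy) then
    dirY D (modD D (x0 + T * vx)) (modD D (y0 + T * vy))
  else D / 2

lemma modD_mem (D r : ℝ) (hD : 0 < D) : modD D r ∈ Set.Ico 0 D := by
  have h1 := Int.fract_nonneg (r / D)
  have h2 := Int.fract_lt_one (r / D)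
  have hf : modD D r = D * Int.fract (r / D) := by
    unfold modD; rw [Int.fract]; field_simp
  constructor
  · rw [hf]; exact mul_nonneg hD.le h1
  · rw [hf]; nlinarith

lemma modD_eq_self (D r : ℝ) (hD : 0 < D) (h : r ∈ Set.Ico 0 D) : modD D r = r := by
  have h0 : ⌊r / D⌋ = 0 := by
    apply Int.floor_eq_zero_iff.mpr
    exact ⟨div_nonneg h.1 hD.le, (div_lt_one hD).mpr h.2⟩
  unfold modD; rw [h0]; push_cast; ring

lemma modD_sub_int (D r : ℝ) (hD : 0 < D) (n : ℤ) : modD D (r - D * n) = modD D r := by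
  have hq : (r - D * n) / D = r / D - n := by field_simp
  unfold modD
  rw [hq, Int.floor_sub_intCast]
  push_cast; ring

lemma modD_add_D (D r : ℝ) (hD : 0 < D) : modD D (r + D) = modD D r := by
  have h := modD_sub_int D (r + D) hD 1
  simp at h
  exact h.symm

lemma uXn_le (D T x0 y0 vx vy : ℝ) (hD : 0 < D) : uXn D T x0 y0 vx vy ≤ D := by
  unfold uXn
  split
  · have hx := modD_mem D (x0 + T * vx) hD
    have hy := modD_mem D (y0 + T * vy) hD
    unfold dirX
    split
    · linarith [hx.1, hy.2]
    · push_neg at *; linarith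
  · linarith

/-- ε-best reply of player x by overtaking: if v + d₀/T + ε/T ≤ v_max, then the speed
v* = v + d₀/T + ε/T yields payoff D − ε against player y driving at speed v, and is
an ε-best reply of player x. -/
theorem eps_best_reply_x_overtaking
    (D T vmin vmax x0 y0 d0 d ε v : ℝ)
    (hD : 0 < D) (hvmin : 0 < vmin) (hvv : vmin < vmax) (hT : 0 < T)
    (hshort : T * vmax < D / 2)
    (hx0 : x0 ∈ Set.Ico 0 D) (hy0 : y0 ∈ Set.Ico 0 D)
    (hd0 : d0 = dirX D x0 y0) (hd : d = T * (vmax - vmin))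
    (hd0pos : 0 < d0) (hd0d : d0 < d) (hdy : d < dirY D x0 y0)
    (hε : 0 < ε) (hv : v ∈ Set.Icc vmin vmax)
    (hvstar : v + d0 / T + ε / T ≤ vmax) :
    uXn D T x0 y0 (v + d0 / T + ε / T) v = D - ε ∧
    ∀ w ∈ Set.Icc vmin vmax,
      uXn D T x0 y0 w v ≤ uXn D T x0 y0 (v + d0 / T + ε / T) v + ε := by
  have hTne : T ≠ 0 := ne_of_gt hT
  -- ε < D/2
  have hεled : ε ≤ T * (vmax - v) - d0 := by
    have h2 : T * (v + d0 / T + ε / T) ≤ T * vmax :=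
      mul_le_mul_of_nonneg_left hvstar hT.le
    have h3 : T * (v + d0 / T + ε / T) = T * v + d0 + ε := by
      field_simp
    linarith [h3 ▸ h2]
  have hεsmall : ε < D / 2 := by
    have hvge : vmin ≤ v := hv.1
    nlinarith [mul_le_mul_of_nonneg_left hvge hT.le, mul_pos hT hvmin]
  have hεD : ε < D := by linarith
  -- key: x_T = modD (y0 + T*v + ε)
  have hkey : modD D (x0 + T * (v + d0 / T + ε / T)) = modD D (y0 + T * v + ε) := by
    have harg : x0 + T * (v + d0 / T + ε / T) = x0 + d0 + T * v + ε := by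
      field_simp; ring
    rw [harg, hd0]
    unfold dirX
    split
    · ring_nf
    · have : x0 + (D + y0 - x0) + T * v + ε = (y0 + T * v + ε) + D := by ring
      rw [this, modD_add_D D _ hD]
  set β := modD D (y0 + T * v) with hβ
  have hβmem := modD_mem D (y0 + T * v) hD
  have hkey2 : modD D (y0 + T * v + ε) = modD D (β + ε) := by
    have : β + ε = (y0 + T * v + ε) - D * (⌊(y0 + T * v) / D⌋ : ℤ) := by
      rw [hβ]; unfold modD; push_cast; ring
    rw [this, modD_sub_int D _ hD]
  -- value of x_T
  have hmain : uXn D T x0 y0 (v + d0 / T + ε / T) v = D - ε := by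
    unfold uXn
    rw [hkey, hkey2, ← hβ]
    rcases lt_or_ge (β + ε) D with hc | hc
    · have hx : modD D (β + ε) = β + ε :=
        modD_eq_self D _ hD ⟨by linarith [hβmem.1], hc⟩
      rw [hx]
      rw [if_pos (by intro h; linarith)]
      unfold dirX
      rw [if_neg (by linarith)]
      ring
    · have hx : modD D (β + ε) = β + ε - D := by
        have h1 : β + ε - D = (β + ε) - D * (1 : ℤ) := by push_cast; ring
        rw [show modD D (β + ε) = modD D ((β + ε) - D * (1:ℤ)) by
              rw [modD_sub_int D _ hD]]
        rw [← h1]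
        exact modD_eq_self D _ hD ⟨by linarith, by linarith [hβmem.2]⟩
      rw [hx]
      rw [if_pos (by intro h; linarith)]
      unfold dirX
      rw [if_pos (by linarith)]
      ring
  refine ⟨hmain, fun w _ => ?_⟩
  rw [hmain]
  have := uXn_le D T x0 y0 w v hD
  linarith
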